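/- Explicit formula for L_π: given distinct λᵢ^π and reals βᵢ^π, the lower unipotent matrix L with entries L_{ij} = (β_j^π ⋯ β_{i−1}^π) / ((λ_i^π − λ_j^π)(λ_i^π − λ_{j+1}^π) ⋯ (λ_i^π − λ_{i−1}^π)) for j < i, L_{ii} = 1, satisfies L B_π = Λ^π L, where B_π is the lower bidiagonal matrix with diagonal Λ^π and subdiagonal entries βᵢ^π. -/

import Mathlib

open Matrix

/-- `L` is lower triangular with unit diagonal. -/
def IsUnipLower {n : ℕ} (L : Matrix (Fin n) (Fin n) ℝ) : Prop :=
  (∀ i j : Fin n, i < j → L i j = 0) ∧ ∀ i : Fin n, L i i = 1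

/-- `U` is upper triangular with strictly positive diagonal. -/
def IsUpperTriPos {n : ℕ} (U : Matrix (Fin n) (Fin n) ℝ) : Prop :=
  (∀ i j : Fin n, j < i → U i j = 0) ∧ ∀ i : Fin n, 0 < U i i

/-- The leading principal minor of order `k` of `M`. -/
def leadingMinor {n : ℕ} (M : Matrix (Fin n) (Fin n) ℝ) (k : ℕ) (h : k ≤ n) : ℝ :=
  (Matrix.of fun i j : Fin k => M (Fin.castLE h i) (Fin.castLE h j)).det

/-- `M` is LU-positive: all leading principal minors are strictly positive. -/
def LUPositive {n : ℕ} (M : Matrix (Fin n) (Fin n) ℝ) : Prop :=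
  ∀ k (h : k ≤ n), 0 < leadingMinor M k h

/-- `Q` is orthogonal. -/
def IsOrth {n : ℕ} (Q : Matrix (Fin n) (Fin n) ℝ) : Prop := Qᵀ * Q = 1

/-- `E` is a sign diagonal `diag(±1, …, ±1)`. -/
def IsSignDiag {n : ℕ} (E : Matrix (Fin n) (Fin n) ℝ) : Prop :=
  (∀ i j : Fin n, i ≠ j → E i j = 0) ∧ ∀ i : Fin n, E i i = 1 ∨ E i i = -1

/-- `M` is tridiagonal. -/
def IsTridiag {n : ℕ} (M : Matrix (Fin n) (Fin n) ℝ) : Prop :=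
  ∀ i j : Fin n, ((i : ℕ) + 1 < (j : ℕ) ∨ (j : ℕ) + 1 < (i : ℕ)) → M i j = 0

lemma key13 (lam β : ℕ → ℝ) (a b : ℕ) (hab : a < b)
    (hne : ∀ k ∈ Finset.Ico a b, lam b - lam k ≠ 0) :
    β a * ((∏ k ∈ Finset.Ico (a+1) b, β k) / (∏ k ∈ Finset.Ico (a+1) b, (lam b - lam k)))
      = (lam b - lam a) * ((∏ k ∈ Finset.Ico a b, β k) / (∏ k ∈ Finset.Ico a b, (lam b - lam k))) := by
  rw [Finset.prod_eq_prod_Ico_succ_bot hab β,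
      Finset.prod_eq_prod_Ico_succ_bot hab (fun k => lam b - lam k)]
  have h1 : lam b - lam a ≠ 0 := hne a (Finset.mem_Ico.mpr ⟨le_rfl, hab⟩)
  have h2 : ∏ k ∈ Finset.Ico (a+1) b, (lam b - lam k) ≠ 0 :=
    Finset.prod_ne_zero_iff.mpr fun k hk =>
      hne k (Finset.Ico_subset_Ico (Nat.le_succ a) le_rfl hk)
  field_simp

/-- Explicit formula for `L_π`: the lower unipotent matrix with entries
`L i j = (β_j ⋯ β_{i-1}) / ((λ_i − λ_j) ⋯ (λ_i − λ_{i-1}))` for `j ≤ i`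
satisfies `L * B_π = Λ^π * L`, where `B_π` is lower bidiagonal with diagonal `Λ^π`
and subdiagonal entries `βᵢ`. -/
theorem stmt13 (n : ℕ) (lam β : ℕ → ℝ)
    (hlam : ∀ i j : Fin n, i ≠ j → lam (i : ℕ) ≠ lam (j : ℕ))
    (L B : Matrix (Fin n) (Fin n) ℝ)
    (hL : L = Matrix.of fun i j : Fin n =>
      if (j : ℕ) ≤ (i : ℕ) then
        (∏ k ∈ Finset.Ico (j : ℕ) (i : ℕ), β k) /
          (∏ k ∈ Finset.Ico (j : ℕ) (i : ℕ), (lam (i : ℕ) - lam k))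
      else 0)
    (hB : B = Matrix.of fun i j : Fin n =>
      if (i : ℕ) = (j : ℕ) then lam (i : ℕ)
      else if (i : ℕ) = (j : ℕ) + 1 then β (j : ℕ) else 0) :
    L * B = Matrix.diagonal (fun i : Fin n => lam (i : ℕ)) * L := by
  have hLe : ∀ i j : Fin n, L i j =
      if (j : ℕ) ≤ (i : ℕ) then
        (∏ k ∈ Finset.Ico (j : ℕ) (i : ℕ), β k) /
          (∏ k ∈ Finset.Ico (j : ℕ) (i : ℕ), (lam (i : ℕ) - lam k))
      else 0 := by intro i j; rw [hL]; rfl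
  have hBe : ∀ i j : Fin n, B i j =
      if (i : ℕ) = (j : ℕ) then lam (i : ℕ)
      else if (i : ℕ) = (j : ℕ) + 1 then β (j : ℕ) else 0 := by
    intro i j; rw [hB]; rfl
  ext i j
  rw [Matrix.mul_apply, Matrix.diagonal_mul]
  have step : ∀ k : Fin n, L i k * B k j =
      (if k = j then L i j * lam (j : ℕ) else 0) +
        (if (k : ℕ) = (j : ℕ) + 1 then L i k * β (j : ℕ) else 0) := by
    intro k
    rw [hBe]
    rcases eq_or_ne k j with h | h
    · subst h; simp
    · have hnk : (k : ℕ) ≠ (j : ℕ) := fun hh => h (Fin.ext hh)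
      simp only [hnk, if_false, h, zero_add, mul_ite, mul_zero]
  rw [Finset.sum_congr rfl (fun k _ => step k), Finset.sum_add_distrib]
  have hsum1 : ∑ k : Fin n, (if k = j then L i j * lam (j : ℕ) else 0)
      = L i j * lam (j : ℕ) := by
    rw [Finset.sum_ite_eq' Finset.univ j]; simp
  have hsum2 : ∑ k : Fin n, (if (k : ℕ) = (j : ℕ) + 1 then L i k * β (j : ℕ) else 0)
      = if h : (j : ℕ) + 1 < n then L i ⟨(j : ℕ) + 1, h⟩ * β (j : ℕ) else 0 := by
    split_ifs with h
    · rw [Finset.sum_eq_single (⟨(j : ℕ) + 1, h⟩ : Fin n)]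
      · simp
      · intro k _ hk
        have : (k : ℕ) ≠ (j : ℕ) + 1 := fun hh => hk (Fin.ext hh)
        simp [this]
      · simp
    · apply Finset.sum_eq_zero
      intro k _
      have : (k : ℕ) ≠ (j : ℕ) + 1 := by have := k.isLt; omega
      simp [this]
  rw [hsum1, hsum2]
  rcases lt_trichotomy ((j : ℕ)) ((i : ℕ)) with hji | hji | hji
  · -- j < i
    have hjn : (j : ℕ) + 1 < n := lt_of_le_of_lt hji i.isLt
    rw [dif_pos hjn]
    have e1 : L i j = (∏ k ∈ Finset.Ico (j : ℕ) (i : ℕ), β k) /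
        (∏ k ∈ Finset.Ico (j : ℕ) (i : ℕ), (lam (i : ℕ) - lam k)) := by
      rw [hLe]; exact if_pos (le_of_lt hji)
    have e2 : L i ⟨(j : ℕ) + 1, hjn⟩ =
        (∏ k ∈ Finset.Ico ((j : ℕ) + 1) (i : ℕ), β k) /
          (∏ k ∈ Finset.Ico ((j : ℕ) + 1) (i : ℕ), (lam (i : ℕ) - lam k)) := by
      rw [hLe]; exact if_pos hji
    have hne : ∀ k ∈ Finset.Ico (j : ℕ) (i : ℕ), lam (i : ℕ) - lam k ≠ 0 := by
      intro k hk
      rw [Finset.mem_Ico] at hk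
      have hkn : k < n := lt_trans hk.2 i.isLt
      refine sub_ne_zero.mpr (hlam i ⟨k, hkn⟩ ?_)
      intro hik
      have : (i : ℕ) = k := congrArg Fin.val hik
      omega
    have hkey := key13 lam β (j : ℕ) (i : ℕ) hji hne
    rw [e1, e2]
    linear_combination hkey
  · -- j = i
    have hj : j = i := Fin.ext hji
    subst hj
    have e1 : L j j = 1 := by rw [hLe]; simp
    rw [e1]
    have : (if h : (j : ℕ) + 1 < n then L j ⟨(j : ℕ) + 1, h⟩ * β (j : ℕ) else 0) = 0 := by
      split_ifs with h
      · have : L j ⟨(j : ℕ) + 1, h⟩ = 0 := by rw [hLe]; exact if_neg (by simp)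
        rw [this, zero_mul]
      · rfl
    rw [this]
    ring
  · -- i < j
    have e1 : L i j = 0 := by rw [hLe]; exact if_neg (by omega)
    rw [e1]
    have : (if h : (j : ℕ) + 1 < n then L i ⟨(j : ℕ) + 1, h⟩ * β (j : ℕ) else 0) = 0 := by
      split_ifs with h
      · have : L i ⟨(j : ℕ) + 1, h⟩ = 0 := by rw [hLe]; exact if_neg (by simp; omega)
        rw [this, zero_mul]
      · rfl
    rw [this]
    ring
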